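/- arXiv:1405.3649 — 5 statements merged into one kernel-verified Lean document; each statement's English description precedes it below -/
import Mathlib

section
/- For every positive integer m, the limit as n → ∞ of (1/n²) · Σ_{k=1}^{n} Σ_{j=1}^{n} e^{m · min(j,k)/max(j,k)} equals (e^m − 1)/m. -/
open Filter Finset Real Topology

private lemma sum_Icc_eq_sum_range' (f : ℕ → ℝ) (n : ℕ) :
    ∑ k ∈ Icc 1 n, f k = ∑ i ∈ range n, f (i + 1) := by
  rw [← Finset.Ico_add_one_right_eq_Icc, Finset.sum_Ico_eq_sum_range]
  simp [add_comm]

private lemma gauss_sum_real (n : ℕ) : (∑ k ∈ Icc 1 n, (k : ℝ)) = n * (n + 1) / 2 := by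
  induction n with
  | zero => simp
  | succ n ih =>
      rw [Finset.sum_Icc_succ_top (by omega)]
      push_cast
      rw [ih]; ring

private lemma weighted_cesaro {b : ℕ → ℝ} {L : ℝ} (h : Tendsto b atTop (𝓝 L)) :
    Tendsto (fun n : ℕ => (1 / (n : ℝ) ^ 2) * ∑ k ∈ Icc 1 n, (k : ℝ) * b k)
      atTop (𝓝 (L / 2)) := by
  have h1 : Tendsto (fun n : ℕ => (1 / (n : ℝ) ^ 2) * ∑ k ∈ Icc 1 n, (k : ℝ) * L)
      atTop (𝓝 (L / 2)) := by
    have aux : Tendsto (fun n : ℕ => (1 / 2 + (1 / (n : ℝ)) / 2) * L) atTop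
        (𝓝 ((1 / 2 + 0 / 2) * L)) :=
      (((tendsto_one_div_atTop_nhds_zero_nat).div_const 2).const_add (1/2)).mul_const L
    have : (1 / 2 + (0 : ℝ) / 2) * L = L / 2 := by ring
    rw [this] at aux
    apply aux.congr'
    filter_upwards [eventually_ge_atTop 1] with n hn
    have hn' : (n : ℝ) ≠ 0 := by positivity
    rw [← Finset.sum_mul, gauss_sum_real]
    field_simp
  have h2 : Tendsto (fun n : ℕ => (1 / (n : ℝ) ^ 2) * ∑ k ∈ Icc 1 n, (k : ℝ) * (b k - L))
      atTop (𝓝 0) := by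
    have habs : Tendsto (fun k : ℕ => |b (k + 1) - L|) atTop (𝓝 0) := by
      have : Tendsto (fun k : ℕ => b k - L) atTop (𝓝 0) := by
        simpa using h.sub (tendsto_const_nhds (x := L))
      have := (this.comp (tendsto_add_atTop_nat 1)).abs
      simpa using this
    have hces := habs.cesaro
    apply squeeze_zero_norm' _ hces
    filter_upwards [eventually_ge_atTop 1] with n hn
    have hn0 : (0 : ℝ) < (n : ℝ) := by exact_mod_cast hn
    have step1 : ‖(1 / (n : ℝ) ^ 2) * ∑ k ∈ Icc 1 n, (k : ℝ) * (b k - L)‖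
        ≤ (1 / (n : ℝ) ^ 2) * ∑ k ∈ Icc 1 n, (n : ℝ) * |b k - L| := by
      rw [norm_mul, Real.norm_eq_abs, Real.norm_eq_abs, abs_of_nonneg (by positivity)]
      apply mul_le_mul_of_nonneg_left _ (by positivity)
      calc |∑ k ∈ Icc 1 n, (k : ℝ) * (b k - L)| ≤ ∑ k ∈ Icc 1 n, |(k : ℝ) * (b k - L)| :=
            Finset.abs_sum_le_sum_abs _ _
        _ ≤ ∑ k ∈ Icc 1 n, (n : ℝ) * |b k - L| := by
            apply Finset.sum_le_sum
            intro k hk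
            rw [abs_mul, abs_of_nonneg (by positivity : (0:ℝ) ≤ (k:ℝ))]
            apply mul_le_mul_of_nonneg_right _ (abs_nonneg _)
            exact_mod_cast (Finset.mem_Icc.mp hk).2
    refine step1.trans (le_of_eq ?_)
    rw [← Finset.mul_sum, sum_Icc_eq_sum_range' (fun k => |b k - L|) n]
    field_simp
  have key : ∀ n : ℕ, (1 / (n : ℝ) ^ 2) * ∑ k ∈ Icc 1 n, (k : ℝ) * L
      + (1 / (n : ℝ) ^ 2) * ∑ k ∈ Icc 1 n, (k : ℝ) * (b k - L)
      = (1 / (n : ℝ) ^ 2) * ∑ k ∈ Icc 1 n, (k : ℝ) * b k := by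
    intro n
    rw [← mul_add, ← Finset.sum_add_distrib]
    congr 1
    apply Finset.sum_congr rfl
    intros; ring
  have := h1.add h2
  rw [add_zero] at this
  exact this.congr key

private lemma T_div_tendsto (m : ℕ) (hm : 0 < m) :
    Tendsto (fun k : ℕ => (∑ j ∈ Icc 1 k, Real.exp ((m : ℝ) * j / k)) / k) atTop
      (𝓝 ((Real.exp m - 1) / m)) := by
  have hm0 : (0 : ℝ) < (m : ℝ) := by exact_mod_cast hm
  -- slope limit for exp at 0
  have hslope : Tendsto (fun y : ℝ => (Real.exp y - 1) / y) (𝓝[≠] 0) (𝓝 1) := by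
    have hd := Real.hasDerivAt_exp 0
    rw [hasDerivAt_iff_tendsto_slope] at hd
    rw [Real.exp_zero] at hd
    have : slope Real.exp 0 = fun y : ℝ => (Real.exp y - 1) / y := by
      funext y
      rw [slope_def_field, Real.exp_zero, sub_zero]
    rwa [this] at hd
  have hg0 : Tendsto (fun k : ℕ => (m : ℝ) / k) atTop (𝓝 0) := by
    have := tendsto_one_div_atTop_nhds_zero_nat.const_mul (m : ℝ)
    rw [mul_zero] at this
    apply this.congr
    intro n; rw [mul_one_div]
  have hg : Tendsto (fun k : ℕ => (m : ℝ) / k) atTop (𝓝[≠] 0) := by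
    rw [tendsto_nhdsWithin_iff]
    refine ⟨hg0, ?_⟩
    filter_upwards [eventually_ge_atTop 1] with k hk
    have hk0 : (0 : ℝ) < (k : ℝ) := by exact_mod_cast hk
    simp only [Set.mem_compl_iff, Set.mem_singleton_iff]
    positivity
  have hd : Tendsto (fun k : ℕ => (k : ℝ) * (Real.exp ((m : ℝ) / k) - 1)) atTop (𝓝 m) := by
    have comp := hslope.comp hg
    have := comp.const_mul (m : ℝ)
    rw [mul_one] at this
    apply this.congr'
    filter_upwards [eventually_ge_atTop 1] with k hk
    have hk0 : (0 : ℝ) < (k : ℝ) := by exact_mod_cast hk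
    simp only [Function.comp]
    field_simp
  have hr1 : Tendsto (fun k : ℕ => Real.exp ((m : ℝ) / k)) atTop (𝓝 1) := by
    have := (Real.continuous_exp.tendsto 0).comp hg0
    simpa [Function.comp_def] using this
  -- closed form
  have closed : ∀ k : ℕ, 1 ≤ k →
      (∑ j ∈ Icc 1 k, Real.exp ((m : ℝ) * j / k)) / k
      = (Real.exp m - 1) * Real.exp ((m : ℝ) / k)
        / ((k : ℝ) * (Real.exp ((m : ℝ) / k) - 1)) := by
    intro k hk
    have hk0 : (0 : ℝ) < (k : ℝ) := by exact_mod_cast hk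
    set r := Real.exp ((m : ℝ) / k) with hr
    have hrgt : 1 < r := by
      rw [hr, ← Real.exp_zero]
      exact Real.exp_lt_exp.mpr (by positivity)
    have hrne : r ≠ 1 := hrgt.ne'
    have hrk : r ^ k = Real.exp m := by
      rw [hr, ← Real.exp_nat_mul]
      congr 1
      field_simp
    have hsum : (∑ j ∈ Icc 1 k, Real.exp ((m : ℝ) * j / k)) = r * ((r ^ k - 1) / (r - 1)) := by
      rw [← geom_sum_eq hrne k, Finset.mul_sum]
      rw [sum_Icc_eq_sum_range' (fun j => Real.exp ((m : ℝ) * j / k)) k]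
      apply Finset.sum_congr rfl
      intro i _
      rw [hr, ← Real.exp_nat_mul, ← Real.exp_add]
      congr 1
      push_cast
      field_simp
      ring
    rw [hsum, hrk]
    have hr1ne : r - 1 ≠ 0 := sub_ne_zero.mpr hrne
    field_simp
  -- assemble
  have main : Tendsto (fun k : ℕ => (Real.exp m - 1) * Real.exp ((m : ℝ) / k)
      / ((k : ℝ) * (Real.exp ((m : ℝ) / k) - 1))) atTop
      (𝓝 ((Real.exp m - 1) * 1 / m)) :=
    Tendsto.div ((tendsto_const_nhds (x := Real.exp m - 1)).mul hr1) hd hm0.ne'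
  have : (Real.exp (m : ℝ) - 1) * 1 / (m : ℝ) = (Real.exp m - 1) / m := by ring
  rw [this] at main
  apply main.congr'
  filter_upwards [eventually_ge_atTop 1] with k hk
  exact (closed k hk).symm

private lemma sum_identity (m n : ℕ) (hm : 0 < m) :
    (∑ k ∈ Icc 1 n, ∑ j ∈ Icc 1 n,
        Real.exp ((m : ℝ) * ((min j k : ℕ) : ℝ) / ((max j k : ℕ) : ℝ)))
      = 2 * (∑ k ∈ Icc 1 n, ∑ j ∈ Icc 1 k, Real.exp ((m : ℝ) * j / k))
        - n * Real.exp m := by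
  set f : ℕ → ℕ → ℝ :=
    fun j k => Real.exp ((m : ℝ) * ((min j k : ℕ) : ℝ) / ((max j k : ℕ) : ℝ)) with hf
  have fsymm : ∀ j k, f j k = f k j := by
    intro j k; simp only [hf, min_comm, max_comm]
  have fval : ∀ j k : ℕ, 1 ≤ j → j ≤ k → f j k = Real.exp ((m : ℝ) * j / k) := by
    intro j k h1 h2
    simp only [hf, min_eq_left h2, max_eq_right h2]
  have fdiag : ∀ k : ℕ, 1 ≤ k → f k k = Real.exp m := by
    intro k hk
    have hk0 : ((k : ℝ)) ≠ 0 := by positivity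
    simp only [hf, min_self, max_self]
    congr 1
    field_simp
  have hIcc : ∀ a : ℕ, Icc 1 a = Ioc 0 a := fun a => Finset.Icc_add_one_left_eq_Ioc 0 a
  -- split inner sums
  have split : ∀ k ∈ Ioc 0 n, ∑ j ∈ Ioc 0 n, f j k
      = ∑ j ∈ Ioc 0 k, f j k + ∑ j ∈ Ioc k n, f j k := by
    intro k hk
    rw [Finset.mem_Ioc] at hk
    exact (Finset.sum_Ioc_consecutive _ (Nat.zero_le k) hk.2).symm
  -- the upper part equals the strict lower part by symmetry
  have upper : (∑ k ∈ Ioc 0 n, ∑ j ∈ Ioc k n, f j k)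
      = ∑ k ∈ Ioc 0 n, ∑ j ∈ Ioo 0 k, f j k := by
    rw [Finset.sum_comm' (s' := fun j => Ioo 0 j) (t' := Ioc 0 n)
      (f := fun k j => f j k)]
    · apply Finset.sum_congr rfl
      intro k _
      apply Finset.sum_congr rfl
      intro j _
      exact fsymm k j
    · intro k j
      simp only [Finset.mem_Ioc, Finset.mem_Ioo]
      omega
  have lower : ∀ k ∈ Ioc 0 n, ∑ j ∈ Ioo 0 k, f j k
      = (∑ j ∈ Ioc 0 k, f j k) - Real.exp m := by
    intro k hk
    rw [Finset.mem_Ioc] at hk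
    have h1 : insert k (Ioo 0 k) = Ioc 0 k := Finset.Ioo_insert_right hk.1
    have h2 : k ∉ Ioo 0 k := by simp
    rw [← h1, Finset.sum_insert h2, fdiag k hk.1]
    ring
  calc (∑ k ∈ Icc 1 n, ∑ j ∈ Icc 1 n, f j k)
      = ∑ k ∈ Ioc 0 n, (∑ j ∈ Ioc 0 k, f j k + ∑ j ∈ Ioc k n, f j k) := by
        rw [hIcc n]
        exact Finset.sum_congr rfl split
    _ = (∑ k ∈ Ioc 0 n, ∑ j ∈ Ioc 0 k, f j k) + ∑ k ∈ Ioc 0 n, ∑ j ∈ Ioc k n, f j k := by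
        rw [Finset.sum_add_distrib]
    _ = (∑ k ∈ Ioc 0 n, ∑ j ∈ Ioc 0 k, f j k)
        + ∑ k ∈ Ioc 0 n, ((∑ j ∈ Ioc 0 k, f j k) - Real.exp m) := by
        rw [upper]
        congr 1
        exact Finset.sum_congr rfl lower
    _ = 2 * (∑ k ∈ Ioc 0 n, ∑ j ∈ Ioc 0 k, f j k) - n * Real.exp m := by
        rw [Finset.sum_sub_distrib, Finset.sum_const, Nat.card_Ioc]
        simp
        ring
    _ = 2 * (∑ k ∈ Icc 1 n, ∑ j ∈ Icc 1 k, Real.exp ((m : ℝ) * j / k)) - n * Real.exp m := by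
        congr 1
        congr 1
        rw [hIcc n]
        apply Finset.sum_congr rfl
        intro k hk
        rw [Finset.mem_Ioc] at hk
        rw [hIcc k]
        apply Finset.sum_congr rfl
        intro j hj
        rw [Finset.mem_Ioc] at hj
        exact fval j k hj.1 hj.2

theorem norm_limit_exp (m : ℕ) (hm : 0 < m) :
    Tendsto (fun n : ℕ => (1 / (n : ℝ) ^ 2) *
        ∑ k ∈ Finset.Icc 1 n, ∑ j ∈ Finset.Icc 1 n,
          Real.exp ((m : ℝ) * ((min j k : ℕ) : ℝ) / ((max j k : ℕ) : ℝ)))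
      atTop (nhds ((Real.exp (m : ℝ) - 1) / (m : ℝ))) := by
  set L : ℝ := (Real.exp (m : ℝ) - 1) / (m : ℝ) with hL
  set T : ℕ → ℝ := fun k => ∑ j ∈ Icc 1 k, Real.exp ((m : ℝ) * j / k) with hT
  have hb : Tendsto (fun k : ℕ => T k / k) atTop (𝓝 L) := T_div_tendsto m hm
  have hwc := weighted_cesaro hb
  have hzero : Tendsto (fun n : ℕ => Real.exp m * ((n : ℝ) / (n : ℝ) ^ 2)) atTop (𝓝 0) := by
    have := tendsto_one_div_atTop_nhds_zero_nat.const_mul (Real.exp m)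
    rw [mul_zero] at this
    apply this.congr'
    filter_upwards [eventually_ge_atTop 1] with n hn
    have hn0 : ((n : ℝ)) ≠ 0 := by positivity
    congr 1
    field_simp
  have combined := (hwc.const_mul 2).sub hzero
  have hval : 2 * (L / 2) - 0 = L := by ring
  rw [hval] at combined
  apply combined.congr'
  filter_upwards [eventually_ge_atTop 1] with n hn
  rw [sum_identity m n hm]
  have hsum : (∑ k ∈ Icc 1 n, (k : ℝ) * (T k / k)) = ∑ k ∈ Icc 1 n, T k := by
    apply Finset.sum_congr rfl
    intro k hk
    rw [Finset.mem_Icc] at hk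
    have : ((k : ℝ)) ≠ 0 := by
      have : 1 ≤ k := hk.1
      positivity
    field_simp
  rw [hsum]
  ring
end

section
/- Let f : [0,1] → ℝ be Riemann integrable. Then the limit as n → ∞ of (1/n²) · Σ_{k=1}^{n} Σ_{j=1}^{n} f(min(j,k)/max(j,k)) equals ∫₀¹ f(x) dx. -/
open Filter

/-- `HasRiemannIntegral f a b I` : for every `ε > 0` there is `δ > 0` such that every
tagged partition of `[a, b]` with mesh `< δ` has Riemann sum within `ε` of `I`. -/
def HasRiemannIntegral (f : ℝ → ℝ) (a b I : ℝ) : Prop :=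
  ∀ ε > (0 : ℝ), ∃ δ > (0 : ℝ), ∀ (n : ℕ) (p : Fin (n + 1) → ℝ) (tag : Fin n → ℝ),
    Monotone p → p 0 = a → p (Fin.last n) = b →
    (∀ i : Fin n, p i.castSucc ≤ tag i ∧ tag i ≤ p i.succ) →
    (∀ i : Fin n, p i.succ - p i.castSucc < δ) →
    |(∑ i : Fin n, f (tag i) * (p i.succ - p i.castSucc)) - I| < ε

open Finset Asymptotics in
/-- Uniform right-endpoint Riemann sums converge to the integral. -/
lemma riemann_tendsto_aux (f : ℝ → ℝ) (I : ℝ) (hf : HasRiemannIntegral f 0 1 I) :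
    Tendsto (fun k : ℕ => (1 / (k : ℝ)) * ∑ j ∈ Finset.Icc 1 k, f ((j : ℝ) / (k : ℝ)))
      atTop (nhds I) := by
  rw [Metric.tendsto_atTop]
  intro ε hε
  obtain ⟨δ, hδ, H⟩ := hf ε hε
  obtain ⟨N, hN⟩ := exists_nat_gt (1 / δ)
  refine ⟨N + 1, fun k hk => ?_⟩
  have hk1 : 1 ≤ k := le_trans (Nat.le_add_left 1 N) hk
  have hkpos : (0 : ℝ) < k := by exact_mod_cast hk1
  have hmesh : (1 : ℝ) / k < δ := by
    rw [div_lt_iff₀ hkpos]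
    have : (1:ℝ)/δ < k := lt_of_lt_of_le hN (by exact_mod_cast le_trans (Nat.le_succ N) hk)
    rw [div_lt_iff₀ hδ] at this
    linarith
  have key := H k (fun i => (i : ℝ) / k) (fun i => ((i : ℝ) + 1) / k)
    (fun a b hab => by
      have h : ((a : ℕ):ℝ) ≤ ((b : ℕ):ℝ) := by exact_mod_cast hab
      exact div_le_div_of_nonneg_right h hkpos.le)
    (by simp)
    (by simp [Fin.last, div_self hkpos.ne'])
    (fun i => by
      constructor
      · simp only [Fin.coe_castSucc]
        gcongr
        linarith
      · apply le_of_eq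
        simp [Fin.val_succ])
    (fun i => by
      simp only [Fin.val_succ, Fin.coe_castSucc]
      have : ((i:ℝ)+1)/k - (i:ℝ)/k = 1/k := by field_simp; ring
      rw [Nat.cast_add, Nat.cast_one, this]
      exact hmesh)
  rw [Real.dist_eq]
  convert key using 3
  rw [Finset.mul_sum]
  rw [← Finset.Ico_add_one_right_eq_Icc, Finset.sum_Ico_eq_sum_range]
  rw [← Fin.sum_univ_eq_sum_range (fun i => (1:ℝ)/k * f ((1 + i : ℕ) / k))]
  apply Finset.sum_congr rfl
  intro i _
  simp only [Fin.val_succ, Fin.coe_castSucc, Nat.cast_add, Nat.cast_one]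
  have : ((i:ℝ)+1)/k - (i:ℝ)/k = 1/k := by field_simp; ring
  rw [this]
  ring_nf

open Finset in
/-- The symmetric double sum decomposes via the triangle `j ≤ k`. -/
lemma sum_sym_aux (f : ℝ → ℝ) (n : ℕ) :
    ∑ k ∈ Finset.Icc 1 n, ∑ j ∈ Finset.Icc 1 n,
        f (((min j k : ℕ) : ℝ) / ((max j k : ℕ) : ℝ))
      = 2 * (∑ k ∈ Finset.Icc 1 n, ∑ j ∈ Finset.Icc 1 k, f ((j:ℝ) / (k:ℝ))) - n * f 1 := by
  have base : ∀ m : ℕ, Finset.Icc 1 m = Finset.Ico 1 (m + 1) := fun m => by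
    rw [Finset.Ico_add_one_right_eq_Icc]
  simp only [base]
  have split : ∑ k ∈ Finset.Ico 1 (n+1), ∑ j ∈ Finset.Ico 1 (n+1),
      f (((min j k : ℕ) : ℝ) / ((max j k : ℕ) : ℝ))
      = (∑ k ∈ Finset.Ico 1 (n+1), ∑ j ∈ Finset.Ico 1 (k+1),
          f (((min j k : ℕ) : ℝ) / ((max j k : ℕ) : ℝ)))
        + ∑ k ∈ Finset.Ico 1 (n+1), ∑ j ∈ Finset.Ico (k+1) (n+1),
          f (((min j k : ℕ) : ℝ) / ((max j k : ℕ) : ℝ)) := by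
    rw [← Finset.sum_add_distrib]
    refine Finset.sum_congr rfl fun k hk => ?_
    rw [Finset.mem_Ico] at hk
    rw [Finset.sum_Ico_consecutive _ (by omega) (by omega)]
  rw [split]
  have first : ∑ k ∈ Finset.Ico 1 (n+1), ∑ j ∈ Finset.Ico 1 (k+1),
      f (((min j k : ℕ) : ℝ) / ((max j k : ℕ) : ℝ))
      = ∑ k ∈ Finset.Ico 1 (n+1), ∑ j ∈ Finset.Ico 1 (k+1), f ((j:ℝ)/(k:ℝ)) := by
    refine Finset.sum_congr rfl fun k hk => Finset.sum_congr rfl fun j hj => ?_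
    rw [Finset.mem_Ico] at hj
    have hjk : j ≤ k := by omega
    rw [min_eq_left hjk, max_eq_right hjk]
  have second : ∑ k ∈ Finset.Ico 1 (n+1), ∑ j ∈ Finset.Ico (k+1) (n+1),
      f (((min j k : ℕ) : ℝ) / ((max j k : ℕ) : ℝ))
      = (∑ k ∈ Finset.Ico 1 (n+1), ∑ j ∈ Finset.Ico 1 (k+1), f ((j:ℝ)/(k:ℝ))) - n * f 1 := by
    rw [Finset.sum_Ico_Ico_comm' 1 (n+1)
      (fun k j => f (((min j k : ℕ) : ℝ) / ((max j k : ℕ) : ℝ)))]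
    have inner : ∀ j ∈ Finset.Ico 1 (n+1), (∑ k ∈ Finset.Ico 1 j,
        f (((min j k : ℕ) : ℝ) / ((max j k : ℕ) : ℝ)))
        = (∑ k ∈ Finset.Ico 1 (j+1), f ((k:ℝ)/(j:ℝ))) - f 1 := by
      intro j hj
      rw [Finset.mem_Ico] at hj
      have hj1 : (1:ℕ) ≤ j := hj.1
      rw [Finset.sum_Ico_succ_top hj1]
      have hjj : (j:ℝ)/(j:ℝ) = 1 := div_self (by exact_mod_cast Nat.pos_of_ne_zero (by omega) |>.ne')
      rw [hjj]
      rw [add_sub_cancel_right]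
      refine Finset.sum_congr rfl fun k hk => ?_
      rw [Finset.mem_Ico] at hk
      have hkj : k ≤ j := by omega
      rw [min_eq_right hkj, max_eq_left hkj]
    rw [Finset.sum_congr rfl inner, Finset.sum_sub_distrib, Finset.sum_const,
      Nat.card_Ico]
    simp [nsmul_eq_mul]
  rw [first, second]
  ring

lemma gauss_real_aux (m : ℕ) : ∑ i ∈ Finset.range m, (i:ℝ) = m * (m - 1) / 2 := by
  induction m with
  | zero => simp
  | succ p ih =>
    rw [Finset.sum_range_succ, ih]
    push_cast
    ring

open Finset Asymptotics in
/-- Weighted Cesàro: if `u → I` then `(2/n²) Σ_{k=1}^n k u_k → I`. -/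
lemma weighted_cesaro_aux (u : ℕ → ℝ) (I : ℝ) (hu : Filter.Tendsto u atTop (nhds I)) :
    Filter.Tendsto (fun n : ℕ => (2 / (n:ℝ)^2) * ∑ k ∈ Finset.Icc 1 n, (k:ℝ) * u k)
      atTop (nhds I) := by
  set v : ℕ → ℝ := fun k => u k - I with hv
  have hv0 : Filter.Tendsto v atTop (nhds 0) := by
    simpa using hu.sub (tendsto_const_nhds (x := I))
  have h0 : (fun k : ℕ => (k:ℝ) * v k) =o[atTop] (fun k : ℕ => (k:ℝ)) := by
    have := (isBigO_refl (fun k : ℕ => (k:ℝ)) atTop).mul_isLittleO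
      ((isLittleO_one_iff ℝ).2 hv0)
    simpa using this
  have hg : ∀ k : ℕ, (0:ℝ) ≤ (k:ℝ) := fun k => Nat.cast_nonneg k
  have h'g : Filter.Tendsto (fun n : ℕ => ∑ i ∈ Finset.range n, (i:ℝ)) atTop atTop := by
    apply Filter.tendsto_atTop_mono (fun n : ℕ => ?_)
      (Filter.tendsto_atTop_add_const_right atTop (-1) (tendsto_natCast_atTop_atTop (R := ℝ)))
    rw [gauss_real_aux]
    rcases le_or_gt n 1 with h | h
    · interval_cases n <;> norm_num
    · have h2 : (2:ℝ) ≤ (n:ℝ) := by exact_mod_cast h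
      nlinarith
  have A := h0.sum_range hg h'g
  have B := A.comp_tendsto (Filter.tendsto_add_atTop_nat 1)
  have hOB : (fun n : ℕ => ∑ i ∈ Finset.range (n+1), (i:ℝ)) =O[atTop]
      (fun n : ℕ => (n:ℝ)^2) := by
    apply IsBigO.of_bound 1
    filter_upwards [Filter.eventually_ge_atTop 1] with n hn
    have hn1 : (1:ℝ) ≤ (n:ℝ) := by exact_mod_cast hn
    rw [gauss_real_aux]
    push_cast
    rw [Real.norm_eq_abs, Real.norm_eq_abs, abs_of_nonneg (by nlinarith),
      abs_of_nonneg (by positivity)]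
    nlinarith
  have C : (fun n : ℕ => ∑ k ∈ Finset.Icc 1 n, (k:ℝ) * v k) =o[atTop]
      (fun n : ℕ => (n:ℝ)^2) := by
    have heq : ∀ n : ℕ, ∑ k ∈ Finset.Icc 1 n, (k:ℝ) * v k
        = ∑ k ∈ Finset.range (n+1), (k:ℝ) * v k := by
      intro n
      rw [Finset.range_eq_Ico, Finset.sum_eq_sum_Ico_succ_bot (by omega)]
      simp [← Finset.Ico_add_one_right_eq_Icc]
    simp only [heq]
    exact (B.trans_isBigO hOB)
  have hC := C.tendsto_div_nhds_zero
  have lim2 : Filter.Tendsto (fun n : ℕ =>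
      2 * ((∑ k ∈ Finset.Icc 1 n, (k:ℝ) * v k) / (n:ℝ)^2) + (I + I * (1/(n:ℝ))))
      atTop (nhds I) := by
    have : Filter.Tendsto (fun n : ℕ => I * (1/(n:ℝ))) atTop (nhds 0) := by
      simpa using (tendsto_const_nhds (x := I)).mul tendsto_one_div_atTop_nhds_zero_nat
    have h1 := ((tendsto_const_nhds (x := (2:ℝ))).mul hC).add
      ((tendsto_const_nhds (x := I)).add this)
    simpa using h1
  apply lim2.congr'
  filter_upwards [Filter.eventually_ge_atTop 1] with n hn
  have hnpos : (0:ℝ) < (n:ℝ) := by exact_mod_cast hn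
  have hsum : ∑ k ∈ Finset.Icc 1 n, (k:ℝ) * u k
      = (∑ k ∈ Finset.Icc 1 n, (k:ℝ) * v k) + I * ((n:ℝ) * ((n:ℝ)+1) / 2) := by
    have hS : ∑ k ∈ Finset.Icc 1 n, (k:ℝ) = (n:ℝ) * ((n:ℝ)+1) / 2 := by
      have : ∑ k ∈ Finset.Icc 1 n, (k:ℝ) = ∑ k ∈ Finset.range (n+1), (k:ℝ) := by
        rw [Finset.range_eq_Ico, Finset.sum_eq_sum_Ico_succ_bot (by omega)]
        simp [← Finset.Ico_add_one_right_eq_Icc]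
      rw [this, gauss_real_aux]
      push_cast
      ring
    calc ∑ k ∈ Finset.Icc 1 n, (k:ℝ) * u k
        = ∑ k ∈ Finset.Icc 1 n, ((k:ℝ) * v k + (k:ℝ) * I) := by
          refine Finset.sum_congr rfl fun k _ => ?_
          simp [hv]; ring
      _ = (∑ k ∈ Finset.Icc 1 n, (k:ℝ) * v k) + (∑ k ∈ Finset.Icc 1 n, (k:ℝ)) * I := by
          rw [Finset.sum_add_distrib, Finset.sum_mul]
      _ = _ := by rw [hS]; ring
  rw [hsum]
  field_simp

theorem norm_limit_riemann (f : ℝ → ℝ) (I : ℝ) (hf : HasRiemannIntegral f 0 1 I) :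
    Tendsto (fun n : ℕ => (1 / (n : ℝ) ^ 2) *
        ∑ k ∈ Finset.Icc 1 n, ∑ j ∈ Finset.Icc 1 n,
          f (((min j k : ℕ) : ℝ) / ((max j k : ℕ) : ℝ)))
      atTop (nhds I) := by
  set a : ℕ → ℝ := fun k => (1 / (k:ℝ)) * ∑ j ∈ Finset.Icc 1 k, f ((j:ℝ)/(k:ℝ)) with ha
  have ht : Tendsto a atTop (nhds I) := riemann_tendsto_aux f I hf
  have hw := weighted_cesaro_aux a I ht
  have hzero : Tendsto (fun n : ℕ => f 1 * (1/(n:ℝ))) atTop (nhds 0) := by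
    simpa using (tendsto_const_nhds (x := f 1)).mul tendsto_one_div_atTop_nhds_zero_nat
  have hfin := hw.sub hzero
  rw [sub_zero] at hfin
  apply hfin.congr'
  filter_upwards [Filter.eventually_ge_atTop 1] with n hn
  have hnpos : (0:ℝ) < (n:ℝ) := by exact_mod_cast hn
  rw [sum_sym_aux f n]
  have hka : ∀ k ∈ Finset.Icc 1 n, (k:ℝ) * a k = ∑ j ∈ Finset.Icc 1 k, f ((j:ℝ)/(k:ℝ)) := by
    intro k hk
    rw [Finset.mem_Icc] at hk
    have hkpos : (0:ℝ) < (k:ℝ) := by exact_mod_cast hk.1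
    rw [ha]
    field_simp
  rw [Finset.sum_congr rfl hka]
  field_simp
end

section
/- The integral ∫₀¹ ln Γ(x) dx equals ln √(2π). -/
open Real MeasureTheory Set intervalIntegral

lemma continuousAt_log_Gamma {x : ℝ} (hx : 0 < x) :
    ContinuousAt (fun y => Real.log (Real.Gamma y)) x := by
  refine (Real.differentiableAt_Gamma fun m => ?_).continuousAt.log
    (Real.Gamma_pos_of_pos hx).ne'
  exact (lt_of_le_of_lt (neg_nonpos.mpr (Nat.cast_nonneg m)) hx).ne'

lemma integrableOn_log_Ioc : IntegrableOn Real.log (Ioc (0:ℝ) 1) volume := by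
  have hg : IntegrableOn (fun x : ℝ => 2 * x ^ (-(1/2) : ℝ)) (Ioc 0 1) volume := by
    have h := (intervalIntegrable_rpow' (a := 0) (b := 1)
      (by norm_num : (-1:ℝ) < -(1/2))).const_mul 2
    rwa [intervalIntegrable_iff_integrableOn_Ioc_of_le zero_le_one] at h
  refine hg.mono' Real.measurable_log.aestronglyMeasurable ?_
  refine (ae_restrict_iff' measurableSet_Ioc).mpr (ae_of_all _ fun x hx => ?_)
  have hx0 : (0:ℝ) < x := hx.1
  rw [Real.norm_eq_abs, abs_of_nonpos (Real.log_nonpos hx0.le hx.2)]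
  have h2 : -Real.log x = 2 * Real.log (x ^ (-(1/2):ℝ)) := by
    rw [Real.log_rpow hx0]; ring
  rw [h2]
  have h3 : Real.log (x ^ (-(1/2):ℝ)) ≤ x ^ (-(1/2):ℝ) :=
    Real.log_le_self (Real.rpow_nonneg hx0.le _)
  linarith

lemma intervalIntegrable_log_Gamma :
    IntervalIntegrable (fun x => Real.log (Real.Gamma x)) volume 0 1 := by
  rw [intervalIntegrable_iff_integrableOn_Ioc_of_le zero_le_one]
  have h1 : IntegrableOn (fun x : ℝ => Real.log (Real.Gamma (x+1)) - Real.log x)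
      (Ioc 0 1) volume := by
    apply Integrable.sub
    · refine (ContinuousOn.integrableOn_Icc ?_).mono_set Ioc_subset_Icc_self
      intro x hx
      have h1 : (0:ℝ) < x + 1 := by linarith [hx.1]
      have h2 : ContinuousAt (fun y : ℝ => y + 1) x := by fun_prop
      exact (ContinuousAt.comp (g := fun y => Real.log (Real.Gamma y)) (f := fun y : ℝ => y + 1) (continuousAt_log_Gamma h1) h2).continuousWithinAt
    · exact integrableOn_log_Ioc
  refine h1.congr_fun (fun x hx => ?_) measurableSet_Ioc
  beta_reduce
  rw [Real.Gamma_add_one hx.1.ne', Real.log_mul hx.1.ne' (Real.Gamma_pos_of_pos hx.1).ne']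
  ring

theorem integral_log_gamma :
    ∫ x in (0 : ℝ)..1, Real.log (Real.Gamma x) = Real.log (Real.sqrt (2 * π)) := by
  set f : ℝ → ℝ := fun x => Real.log (Real.Gamma x) with hf
  set I : ℝ := ∫ x in (0:ℝ)..1, f x with hI
  have hInt := intervalIntegrable_log_Gamma
  have hA : IntervalIntegrable f volume 0 (1/2) :=
    hInt.mono_set (by rw [uIcc_of_le (by norm_num), uIcc_of_le zero_le_one]
                      exact Icc_subset_Icc le_rfl (by norm_num))
  have hB : IntervalIntegrable f volume (1/2) 1 :=
    hInt.mono_set (by rw [uIcc_of_le (by norm_num), uIcc_of_le zero_le_one]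
                      exact Icc_subset_Icc (by norm_num) le_rfl)
  have hsplit : (∫ x in (0:ℝ)..(1/2), f x) + ∫ x in (1/2:ℝ)..1, f x = I :=
    integral_add_adjacent_intervals hA hB
  -- translate the second piece
  have hBshift : (∫ x in (0:ℝ)..(1/2), f (x + 1/2)) = ∫ x in (1/2:ℝ)..1, f x := by
    have h := integral_comp_add_right (a := (0:ℝ)) (b := 1/2) f (1/2)
    rw [show (0:ℝ) + 1/2 = 1/2 by ring, show (1:ℝ)/2 + 1/2 = 1 by ring] at h
    exact h
  have hBint : IntervalIntegrable (fun x => f (x + 1/2)) volume 0 (1/2) := by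
    have h := hB.comp_add_right (1/2)
    rw [show (1:ℝ)/2 - 1/2 = 0 by ring, show (1:ℝ) - 1/2 = 1/2 by ring] at h
    exact h
  -- the doubled piece
  have hCint : IntervalIntegrable (fun x => f (2 * x)) volume 0 (1/2) := by
    have h := hInt.comp_mul_left (c := 2)
    rw [show (0:ℝ)/2 = 0 by ring, show (1:ℝ)/2 = 1/2 by ring] at h
    exact h
  have hC : (∫ x in (0:ℝ)..(1/2), f (2 * x)) = (1/2) * I := by
    have h := integral_comp_mul_left (a := (0:ℝ)) (b := 1/2) f (two_ne_zero)
    rw [show (2:ℝ) * 0 = 0 by ring, show (2:ℝ) * (1/2) = 1 by ring, smul_eq_mul] at h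
    rw [h, ← hI]
    ring
  -- pointwise identity on (0, 1/2]
  have hpt : ∀ x ∈ Set.uIoc (0:ℝ) (1/2), f x + f (x + 1/2) =
      f (2 * x) + ((1 - 2*x) * Real.log 2 + Real.log (Real.sqrt π)) := by
    intro x hx
    rw [uIoc_of_le (by norm_num)] at hx
    have hx0 : (0:ℝ) < x := hx.1
    have h1 : Real.Gamma x * Real.Gamma (x + 1/2)
        = Real.Gamma (2*x) * (2:ℝ) ^ (1 - 2*x) * Real.sqrt π :=
      Real.Gamma_mul_Gamma_add_half x
    have hg1 : (0:ℝ) < Real.Gamma x := Real.Gamma_pos_of_pos hx0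
    have hg2 : (0:ℝ) < Real.Gamma (x + 1/2) := Real.Gamma_pos_of_pos (by linarith)
    have hg3 : (0:ℝ) < Real.Gamma (2*x) := Real.Gamma_pos_of_pos (by linarith)
    have hrp : (0:ℝ) < (2:ℝ) ^ (1 - 2*x) := Real.rpow_pos_of_pos two_pos _
    have hsp : (0:ℝ) < Real.sqrt π := Real.sqrt_pos.mpr Real.pi_pos
    have := congrArg Real.log h1
    rw [Real.log_mul hg1.ne' hg2.ne', Real.log_mul (by positivity) hsp.ne',
      Real.log_mul hg3.ne' hrp.ne', Real.log_rpow two_pos] at this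
    simp only [hf]
    linarith
  have hsum : (∫ x in (0:ℝ)..(1/2), f x) + ∫ x in (0:ℝ)..(1/2), f (x + 1/2)
      = ∫ x in (0:ℝ)..(1/2), (f x + f (x + 1/2)) :=
    (integral_add hA hBint).symm
  have hpoly : IntervalIntegrable
      (fun x : ℝ => (1 - 2*x) * Real.log 2 + Real.log (Real.sqrt π)) volume 0 (1/2) := by
    apply Continuous.intervalIntegrable
    continuity
  have hcongr : (∫ x in (0:ℝ)..(1/2), (f x + f (x + 1/2)))
      = (∫ x in (0:ℝ)..(1/2), f (2*x))
        + ∫ x in (0:ℝ)..(1/2), ((1 - 2*x) * Real.log 2 + Real.log (Real.sqrt π)) := by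
    rw [← integral_add hCint hpoly]
    apply intervalIntegral.integral_congr_ae
    exact ae_of_all _ fun x hx => hpt x hx
  have hpval : (∫ x in (0:ℝ)..(1/2), ((1 - 2*x) * Real.log 2 + Real.log (Real.sqrt π)))
      = (1/4) * Real.log 2 + (1/2) * Real.log (Real.sqrt π) := by
    have : (fun x : ℝ => (1 - 2*x) * Real.log 2 + Real.log (Real.sqrt π))
        = fun x : ℝ => (Real.log 2 + Real.log (Real.sqrt π)) - (2 * Real.log 2) * x := by
      funext x; ring
    rw [this, integral_sub intervalIntegrable_const (intervalIntegrable_id.const_mul _),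
      intervalIntegral.integral_const, intervalIntegral.integral_const_mul, integral_id,
      smul_eq_mul]
    ring
  have hfinal : I = (1/2) * I + ((1/4) * Real.log 2 + (1/2) * Real.log (Real.sqrt π)) := by
    calc I = (∫ x in (0:ℝ)..(1/2), f x) + ∫ x in (1/2:ℝ)..1, f x := hsplit.symm
    _ = (∫ x in (0:ℝ)..(1/2), f x) + ∫ x in (0:ℝ)..(1/2), f (x + 1/2) := by rw [hBshift]
    _ = ∫ x in (0:ℝ)..(1/2), (f x + f (x + 1/2)) := hsum
    _ = (∫ x in (0:ℝ)..(1/2), f (2*x))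
        + ∫ x in (0:ℝ)..(1/2), ((1 - 2*x) * Real.log 2 + Real.log (Real.sqrt π)) := hcongr
    _ = (1/2) * I + ((1/4) * Real.log 2 + (1/2) * Real.log (Real.sqrt π)) := by
        rw [hC, hpval]
  have hsqrt2pi : Real.log (Real.sqrt (2 * π)) = (Real.log 2 + Real.log π) / 2 := by
    rw [Real.log_sqrt (by positivity), Real.log_mul two_ne_zero Real.pi_ne_zero]
  have hsqrtpi : Real.log (Real.sqrt π) = Real.log π / 2 :=
    Real.log_sqrt Real.pi_pos.le
  rw [hsqrtpi] at hfinal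
  show I = _
  rw [hsqrt2pi]
  linarith
end

section
/- Let f : [0,1] → ℝ be Riemann integrable with |f(t)| ≤ 1 for all t, and suppose ∫₀¹ f(t)² dt = 1 while for infinitely many n there exist at least n/2 − 1 indices i ≤ n−1 with f(i/(n−1))·f(i/n) = −1 and f taking only values ±1 at these points. Then f is not Riemann integrable — i.e., no such Riemann integrable f exists. -/
open Filter

theorem no_such_function (f : ℝ → ℝ) (I : ℝ)
    (hbd : ∀ t ∈ Set.Icc (0 : ℝ) 1, |f t| ≤ 1)
    (hsq : HasRiemannIntegral (fun x => f x ^ 2) 0 1 1)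
    (hosc : ∀ N : ℕ, ∃ n : ℕ, N ≤ n ∧ ∃ S : Finset ℕ,
      (n : ℝ) / 2 - 1 ≤ (S.card : ℝ) ∧
      ∀ i ∈ S, 1 ≤ i ∧ i ≤ n - 1 ∧
        f ((i : ℝ) / ((n : ℝ) - 1)) * f ((i : ℝ) / (n : ℝ)) = -1 ∧
        (f ((i : ℝ) / ((n : ℝ) - 1)) = 1 ∨ f ((i : ℝ) / ((n : ℝ) - 1)) = -1) ∧
        (f ((i : ℝ) / (n : ℝ)) = 1 ∨ f ((i : ℝ) / (n : ℝ)) = -1)) :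
    ¬ HasRiemannIntegral f 0 1 I := by
  intro h
  obtain ⟨δ, hδ0, hδ⟩ := h (1/5) (by norm_num)
  obtain ⟨n, hnN, S, hcard, hS⟩ := hosc (max 4 (⌈1/δ⌉₊ + 1))
  have hn4 : 4 ≤ n := le_trans (le_max_left _ _) hnN
  have hn0 : (0:ℝ) < n := by positivity
  have hn4R : (4:ℝ) ≤ (n:ℝ) := by exact_mod_cast hn4
  have hmesh : (1:ℝ)/n < δ := by
    have h1 : ⌈1/δ⌉₊ + 1 ≤ n := le_trans (le_max_right _ _) hnN
    have h2 : (1:ℝ)/δ < n := by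
      calc (1:ℝ)/δ ≤ (⌈1/δ⌉₊ : ℝ) := Nat.le_ceil _
        _ < ((⌈1/δ⌉₊ + 1 : ℕ) : ℝ) := by push_cast; linarith
        _ ≤ n := by exact_mod_cast h1
    rw [div_lt_iff₀ hn0]
    rw [div_lt_iff₀ hδ0] at h2
    nlinarith
  -- partition points
  set p : Fin (n + 1) → ℝ := fun j => (j : ℝ) / n with hp
  have hpm : Monotone p := by
    intro a b hab
    simp only [hp]
    gcongr
    exact_mod_cast Fin.le_def.mp hab
  have hp0 : p 0 = 0 := by simp [hp]
  have hplast : p (Fin.last n) = 1 := by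
    simp [hp, Fin.last]
    omega
  have hΔ : ∀ i : Fin n, p i.succ - p i.castSucc = 1/n := by
    intro i
    simp only [hp, Fin.val_succ, Fin.coe_castSucc]
    push_cast
    field_simp
    ring
  have hΔδ : ∀ i : Fin n, p i.succ - p i.castSucc < δ := fun i => by
    rw [hΔ i]; exact hmesh
  -- tags
  classical
  set g1 : Fin n → ℝ := fun i =>
    if (i:ℕ) ∈ S ∧ f ((i : ℝ) / ((n : ℝ) - 1)) = 1 then (i : ℝ) / ((n : ℝ) - 1)
    else (i : ℝ) / n with hg1
  set g2 : Fin n → ℝ := fun i =>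
    if (i:ℕ) ∈ S ∧ f ((i : ℝ) / ((n : ℝ) - 1)) = -1 then (i : ℝ) / ((n : ℝ) - 1)
    else (i : ℝ) / n with hg2
  -- key facts about the two candidate tag points
  have hpt : ∀ i : Fin n, (i:ℕ) ∈ S →
      p i.castSucc ≤ (i : ℝ) / ((n : ℝ) - 1) ∧ (i : ℝ) / ((n : ℝ) - 1) ≤ p i.succ := by
    intro i hi
    obtain ⟨hi1, hi2, -, -, -⟩ := hS i hi
    have hiR : (i:ℝ) ≤ (n:ℝ) - 1 := by
      have : (i:ℕ) + 1 ≤ n := by omega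
      have := (Nat.cast_le (α := ℝ)).mpr this
      push_cast at this; linarith
    have hiR0 : (0:ℝ) ≤ (i:ℝ) := by positivity
    have hn1 : (0:ℝ) < (n:ℝ) - 1 := by linarith
    constructor
    · simp only [hp, Fin.coe_castSucc]
      rw [div_le_div_iff₀ hn0 hn1]
      nlinarith
    · simp only [hp, Fin.val_succ]
      rw [div_le_div_iff₀ hn1 hn0]
      push_cast
      nlinarith
  have htag_base : ∀ i : Fin n, p i.castSucc ≤ (i : ℝ) / n ∧ (i : ℝ) / n ≤ p i.succ := by
    intro i
    constructor
    · simp [hp]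
    · simp only [hp, Fin.val_succ]
      gcongr
      push_cast
      linarith
  have htag1 : ∀ i : Fin n, p i.castSucc ≤ g1 i ∧ g1 i ≤ p i.succ := by
    intro i
    simp only [hg1]
    split
    · next hc => exact hpt i hc.1
    · exact htag_base i
  have htag2 : ∀ i : Fin n, p i.castSucc ≤ g2 i ∧ g2 i ≤ p i.succ := by
    intro i
    simp only [hg2]
    split
    · next hc => exact hpt i hc.1
    · exact htag_base i
  have H1 := hδ n p g1 hpm hp0 hplast htag1 hΔδ
  have H2 := hδ n p g2 hpm hp0 hplast htag2 hΔδ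
  have hterm : ∀ i : Fin n,
      f (g1 i) * (p i.succ - p i.castSucc) - f (g2 i) * (p i.succ - p i.castSucc)
        = if (i:ℕ) ∈ S then 2/(n:ℝ) else 0 := by
    intro i
    rw [hΔ i]
    by_cases hi : (i:ℕ) ∈ S
    · obtain ⟨-, -, hprod, hcase, -⟩ := hS i hi
      rw [if_pos hi]
      simp only [hg1, hg2]
      rcases hcase with hc | hc
      · rw [if_pos ⟨hi, hc⟩, if_neg (by rintro ⟨-, h⟩; rw [hc] at h; norm_num at h), hc]
        have hfn : f ((i:ℝ)/(n:ℝ)) = -1 := by rw [hc] at hprod; linarith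
        rw [hfn]; ring
      · rw [if_neg (by rintro ⟨-, h⟩; rw [hc] at h; norm_num at h), if_pos ⟨hi, hc⟩, hc]
        have hfn : f ((i:ℝ)/(n:ℝ)) = 1 := by rw [hc] at hprod; linarith
        rw [hfn]; ring
    · simp [hg1, hg2, hi]
  have hfcard : (Finset.univ.filter fun i : Fin n => (i:ℕ) ∈ S).card = S.card := by
    refine Finset.card_bij' (fun (i : Fin n) _ => (i:ℕ))
      (fun s hs => (⟨s, by have := (hS s hs).2.1; omega⟩ : Fin n)) ?_ ?_ ?_ ?_
    · intro i hi
      exact (Finset.mem_filter.mp hi).2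
    · intro s hs
      simpa using hs
    · intro i hi
      simp
    · intro s hs
      simp
  have hsum : (∑ i : Fin n, f (g1 i) * (p i.succ - p i.castSucc))
      - (∑ i : Fin n, f (g2 i) * (p i.succ - p i.castSucc))
      = (S.card : ℝ) * (2/(n:ℝ)) := by
    rw [← Finset.sum_sub_distrib, Finset.sum_congr rfl (fun i _ => hterm i),
      ← Finset.sum_filter, Finset.sum_const, hfcard, nsmul_eq_mul]
  rw [abs_lt] at H1 H2
  have hlow : (1:ℝ) - 2/(n:ℝ) ≤ (S.card : ℝ) * (2/(n:ℝ)) := by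
    have h2n : (0:ℝ) < 2/(n:ℝ) := by positivity
    have := mul_le_mul_of_nonneg_right hcard h2n.le
    calc (1:ℝ) - 2/(n:ℝ) = ((n:ℝ)/2 - 1) * (2/(n:ℝ)) := by field_simp
      _ ≤ _ := this
  have h2n : 2/(n:ℝ) ≤ 1/2 := by
    rw [div_le_div_iff₀ hn0 (by norm_num)]
    linarith
  linarith
end

section
/- For all n = 4k large enough, there is no Riemann integrable function f : [0,1] → ℝ with |f| ≤ 1 such that for every such n the n×n matrix with (i,j)-entry f(min(i,j)/max(i,j)) is a Hadamard matrix (i.e., has entries ±1 and satisfies A·Aᵀ = n·I). -/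
open Filter Matrix

/-- The symmetric matrix with `(i, j)`-entry `f (min (i+1) (j+1) / max (i+1) (j+1))`. -/
noncomputable def Afn (f : ℝ → ℝ) (n : ℕ) : Matrix (Fin n) (Fin n) ℝ :=
  fun i j => f (((min (i.1 + 1) (j.1 + 1) : ℕ) : ℝ) / ((max (i.1 + 1) (j.1 + 1) : ℕ) : ℝ))

/-- A symmetric ±1-diagonal real matrix satisfying `A * Aᵀ = n • 1` forces `n` to be a
perfect square (eigenvalues are `±√n`, and the trace is `±n`). -/
lemma hadamard_symmetric_perfect_square (n : ℕ) (hn : 0 < n)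
    (A : Matrix (Fin n) (Fin n) ℝ) (c : ℝ)
    (hc : c = 1 ∨ c = -1) (hsym : Aᵀ = A) (hdiag : ∀ i, A i i = c)
    (hmul : A * Aᵀ = (n : ℝ) • 1) : ∃ m : ℕ, n = m * m := by
  have hA : A.IsHermitian := by
    show Aᴴ = A
    simpa using hsym
  rw [hsym] at hmul
  set μ := hA.eigenvalues with hμ
  have hUD := hA.conjStarAlgAut_star_eigenvectorUnitary
  rw [Unitary.conjStarAlgAut_star_apply] at hUD
  set U := (hA.eigenvectorUnitary : Matrix (Fin n) (Fin n) ℝ) with hU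
  have hUU : star U * U = 1 := mem_unitaryGroup_iff'.mp hA.eigenvectorUnitary.2
  have hUU' : U * star U = 1 := mem_unitaryGroup_iff.mp hA.eigenvectorUnitary.2
  -- D * D = n • 1
  have hD2 : (diagonal (RCLike.ofReal ∘ μ) : Matrix (Fin n) (Fin n) ℝ) *
      diagonal (RCLike.ofReal ∘ μ) = (n : ℝ) • 1 := by
    rw [← hUD]
    calc (star U * A * U) * (star U * A * U)
        = star U * (A * (U * star U) * A) * U := by noncomm_ring
      _ = star U * (A * A) * U := by rw [hUU']; rw [mul_one]
      _ = star U * ((n : ℝ) • 1) * U := by rw [hmul]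
      _ = (n : ℝ) • (star U * U) := by
          rw [Matrix.mul_smul, mul_one, Matrix.smul_mul]
      _ = (n : ℝ) • 1 := by rw [hUU]
  have hμ2 : ∀ i, μ i * μ i = (n : ℝ) := by
    intro i
    have := congrFun (congrFun hD2 i) i
    simpa [diagonal_mul_diagonal, diagonal_apply_eq, Matrix.smul_apply, Matrix.one_apply] using this
  -- trace
  have htr : ∑ i, μ i = (n : ℝ) * c := by
    have h1 : Matrix.trace A = (n : ℝ) * c := by
      simp [Matrix.trace, Matrix.diag, hdiag, mul_comm]
    have h2 : Matrix.trace A = ∑ i, μ i := by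
      conv_lhs => rw [hA.spectral_theorem, Unitary.conjStarAlgAut_apply]
      rw [Matrix.trace_mul_cycle, ← hU, hUU, Matrix.one_mul, Matrix.trace_diagonal]
      simp [hμ]
    rw [← h2, h1]
  set s := Real.sqrt n with hs
  have hss : s * s = (n : ℝ) := Real.mul_self_sqrt (by positivity)
  have hμs : ∀ i, μ i = s ∨ μ i = -s := by
    intro i
    have : μ i * μ i = s * s := by rw [hμ2, hss]
    rcases mul_self_eq_mul_self_iff.mp this with h | h
    · exact Or.inl h
    · exact Or.inr h
  set P := Finset.univ.filter (fun i : Fin n => μ i = s) with hP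
  set p := P.card with hp
  set q := (Finset.univ.filter (fun i : Fin n => ¬ μ i = s)).card with hq
  have hpq : p + q = n := by
    rw [hp, hq, Finset.card_filter_add_card_filter_not]
    simp
  have hsum : ∑ i, μ i = (p : ℝ) * s - (q : ℝ) * s := by
    rw [← Finset.sum_filter_add_sum_filter_not Finset.univ (fun i => μ i = s)]
    have e1 : ∑ i ∈ P, μ i = (p : ℝ) * s := by
      rw [Finset.sum_congr rfl (fun i hi => (Finset.mem_filter.mp hi).2)]
      simp [hp, mul_comm, hP]
    have hall : ∀ i ∈ Finset.univ.filter (fun i : Fin n => ¬ μ i = s), μ i = -s :=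
      fun i hi => (hμs i).resolve_left (Finset.mem_filter.mp hi).2
    have e2 : ∑ i ∈ Finset.univ.filter (fun i : Fin n => ¬ μ i = s), μ i = -((q : ℝ) * s) := by
      rw [Finset.sum_congr rfl hall, Finset.sum_const, nsmul_eq_mul, ← hq]
      ring
    rw [e1, e2]; ring
  -- ((p:ℝ) - q)^2 = n
  have hkey : ((p : ℝ) - q) ^ 2 = (n : ℝ) := by
    have h1 : ((p : ℝ) - q) * s = (n : ℝ) * c := by rw [← htr, hsum]; ring
    have hc2 : c ^ 2 = 1 := by rcases hc with h | h <;> rw [h] <;> ring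
    have hn' : ((n : ℝ)) ≠ 0 := by positivity
    have h2 : ((p : ℝ) - q) ^ 2 * (n : ℝ) = (n : ℝ) * (n : ℝ) := by
      calc ((p : ℝ) - q) ^ 2 * (n : ℝ) = (((p : ℝ) - q) * s) ^ 2 := by
            rw [mul_pow, sq s, hss]
        _ = ((n : ℝ) * c) ^ 2 := by rw [h1]
        _ = (n : ℝ) * (n : ℝ) := by rw [mul_pow, hc2]; ring
    exact mul_right_cancel₀ hn' h2
  have hd : ((p : ℤ) - q) ^ 2 = (n : ℤ) := by exact_mod_cast hkey
  refine ⟨((p : ℤ) - q).natAbs, ?_⟩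
  have h5 : ((((p : ℤ) - q).natAbs : ℤ)) * (((p : ℤ) - q).natAbs : ℤ) = (n : ℤ) := by
    rw [Int.natAbs_mul_self', ← sq, hd]
  exact_mod_cast h5.symm

theorem no_hadamard_realization :
    ¬ ∃ (f : ℝ → ℝ) (I : ℝ), HasRiemannIntegral f 0 1 I ∧
        (∀ t ∈ Set.Icc (0 : ℝ) 1, |f t| ≤ 1) ∧
        ∃ N : ℕ, ∀ k : ℕ, 0 < k → N ≤ 4 * k →
          ((∀ i j : Fin (4 * k), Afn f (4 * k) i j = 1 ∨ Afn f (4 * k) i j = -1) ∧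
            Afn f (4 * k) * (Afn f (4 * k))ᵀ = ((4 * k : ℕ) : ℝ) • (1 : Matrix (Fin (4 * k)) (Fin (4 * k)) ℝ)) := by
  rintro ⟨f, I, -, -, N, hN⟩
  -- every admissible `4 * j` must be a perfect square
  have square : ∀ j : ℕ, 0 < j → N ≤ 4 * j → ∃ m : ℕ, 4 * j = m * m := by
    intro j hj hNj
    obtain ⟨hent, hmul⟩ := hN j hj hNj
    have hdiag : ∀ i : Fin (4 * j), Afn f (4 * j) i i = f 1 := by
      intro i
      show f (((min (i.1 + 1) (i.1 + 1) : ℕ) : ℝ) / ((max (i.1 + 1) (i.1 + 1) : ℕ) : ℝ)) = f 1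
      rw [min_self, max_self, div_self]
      exact Nat.cast_ne_zero.mpr (Nat.succ_ne_zero _)
    have hc : f 1 = 1 ∨ f 1 = -1 := by
      have hpos : 0 < 4 * j := by omega
      have := hent ⟨0, hpos⟩ ⟨0, hpos⟩
      rwa [hdiag ⟨0, hpos⟩] at this
    have hsym : (Afn f (4 * j))ᵀ = Afn f (4 * j) := by
      ext a b
      show Afn f (4 * j) b a = Afn f (4 * j) a b
      unfold Afn
      rw [min_comm, max_comm]
    exact hadamard_symmetric_perfect_square (4 * j) (by omega) (Afn f (4 * j)) (f 1)
      hc hsym hdiag hmul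
  obtain ⟨m, hm⟩ := square (max N 1) (by omega) (by omega)
  obtain ⟨m', hm'⟩ := square (max N 1 + 1) (by omega) (by omega)
  have h1 : m * m + 4 = m' * m' := by omega
  have h2 : 4 ≤ m * m := by
    have : 1 ≤ max N 1 := le_max_right N 1
    omega
  have hm2 : 2 ≤ m := by nlinarith
  have hlt : m < m' := by
    by_contra h
    push_neg at h
    have := Nat.mul_le_mul h h
    omega
  have h3 := Nat.mul_le_mul (Nat.succ_le_of_lt hlt) (Nat.succ_le_of_lt hlt)
  have h4 : m * m + 2 * m + 1 ≤ m' * m' := by nlinarith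
  linarith
end
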